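/- arXiv:1710.08775 — 3 statements merged into one kernel-verified Lean document; each statement's English description precedes it below -/
import Mathlib

section
/- In a HEDG, if every strongly connected component S lies entirely within a single district of its ancestral closure Anc^G(S), then every pseudo-topological order of G is a perfect elimination order (hence a quasi-topological order). -/
namespace HedgPaper

variable {V : Type*}

/-- directed reachability: existence of a directed path (possibly trivial). -/
def Reach (E : V → V → Prop) : V → V → Prop := Relation.ReflTransGen E

/-- `v` and `w` lie in the same strongly connected component. -/
def InSC (E : V → V → Prop) (v w : V) : Prop := Reach E v w ∧ Reach E w v

/-- the set of ancestors of a set `Z`. -/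
def AncSet (E : V → V → Prop) (Z : Set V) : Set V := {v | ∃ z ∈ Z, Reach E v z}

/-- `H` is a simplicial complex over `V`. -/
def IsSimplicial (H : Set (Set V)) : Prop :=
  (∀ v : V, ({v} : Set V) ∈ H) ∧ ∀ F ∈ H, ∀ F' : Set V, F' ⊆ F → F' ∈ H

/-- direction of an edge on a path: forward, backward, or bidirected. -/
inductive EDir : Type
  | fwd | bwd | bi

/-- one step of a walk in a HEDG. -/
structure Step (V : Type*) where
  src : V
  dir : EDir
  dst : V

/-- the step is an actual (directed or bidirected) edge of the HEDG `(V,E,H)`. -/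
def Step.Valid (E : V → V → Prop) (H : Set (Set V)) (s : Step V) : Prop :=
  match s.dir with
  | .fwd => E s.src s.dst
  | .bwd => E s.dst s.src
  | .bi  => s.src ≠ s.dst ∧ ({s.src, s.dst} : Set V) ∈ H

/-- the step has an arrowhead at its destination. -/
def Step.HeadAtDst (s : Step V) : Prop := s.dir = EDir.fwd ∨ s.dir = EDir.bi

/-- the step has an arrowhead at its source. -/
def Step.HeadAtSrc (s : Step V) : Prop := s.dir = EDir.bwd ∨ s.dir = EDir.bi

/-- `l` is a walk (path, possibly with repeated nodes) from `x` to `y` in `(V,E,H)`. -/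
def IsWalk (E : V → V → Prop) (H : Set (Set V)) : List (Step V) → V → V → Prop
  | [], x, y => x = y
  | s :: l, x, y => s.src = x ∧ s.Valid E H ∧ IsWalk E H l s.dst y

/-- all interior nodes of the walk are `Z`-open in the d-separation sense:
colliders are ancestors of `Z`, non-colliders are not in `Z`. -/
def DInteriorOpen (E : V → V → Prop) (Z : Set V) : List (Step V) → Prop
  | [] => True
  | [_] => True
  | s :: t :: l =>
      ((s.HeadAtDst ∧ t.HeadAtSrc) → s.dst ∈ AncSet E Z) ∧
      (¬ (s.HeadAtDst ∧ t.HeadAtSrc) → s.dst ∉ Z) ∧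
      DInteriorOpen E Z (t :: l)

/-- `X` is d-separated from `Y` given `Z` in the HEDG `(V,E,H)`:
every walk from `X` to `Y` is `Z`-blocked. -/
def DSep (E : V → V → Prop) (H : Set (Set V)) (X Y Z : Set V) : Prop :=
  ∀ x ∈ X, ∀ y ∈ Y, ∀ l : List (Step V),
    IsWalk E H l x y → ¬ (x ∉ Z ∧ y ∉ Z ∧ DInteriorOpen E Z l)

/-- all interior nodes of the walk are `Z`-σ-open: colliders are ancestors of `Z`,
and a non-collider in `Z` must not point (via a directed edge of the path) to a
node outside of its strongly connected component. -/
def SigmaInteriorOpen (E : V → V → Prop) (Z : Set V) : List (Step V) → Prop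
  | [] => True
  | [_] => True
  | s :: t :: l =>
      ((s.HeadAtDst ∧ t.HeadAtSrc) → s.dst ∈ AncSet E Z) ∧
      (¬ (s.HeadAtDst ∧ t.HeadAtSrc) →
        ¬ (s.dst ∈ Z ∧ ((¬ s.HeadAtDst ∧ ¬ InSC E s.dst s.src) ∨
                        (¬ t.HeadAtSrc ∧ ¬ InSC E s.dst t.dst)))) ∧
      SigmaInteriorOpen E Z (t :: l)

/-- `X` is σ-separated from `Y` given `Z` in the HEDG `(V,E,H)`. -/
def SigmaSep (E : V → V → Prop) (H : Set (Set V)) (X Y Z : Set V) : Prop :=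
  ∀ x ∈ X, ∀ y ∈ Y, ∀ l : List (Step V),
    IsWalk E H l x y → ¬ (x ∉ Z ∧ y ∉ Z ∧ SigmaInteriorOpen E Z l)

/-- directed edges of the marginalization of `(V,E,H)` w.r.t. (i.e. after removing) `U`:
`a → b` iff there is a directed path `a → u₁ → ⋯ → u_r → b` in `G` with all `uᵢ ∈ U`. -/
def MargE (E : V → V → Prop) (U : Set V) : V → V → Prop :=
  fun a b => a ∉ U ∧ b ∉ U ∧
    ∃ c, Relation.ReflTransGen (fun x y => E x y ∧ y ∈ U) a c ∧ E c b

/-- hyperedges of the marginalization of `(V,E,H)` w.r.t. `U`. -/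
def MargH (E : V → V → Prop) (H : Set (Set V)) (U : Set V) : Set (Set V) :=
  {F' | (∀ v ∈ F', v ∉ U) ∧ ∃ F ∈ H, F ⊆ F' ∪ U ∧
    ∀ v ∈ F', (v ∈ F ∧ v ∉ U) ∨
      ∃ u ∈ F ∩ U, ∃ c, Relation.ReflTransGen (fun x y => E x y ∧ y ∈ U) u c ∧ E c v}

/-- bidirected-edge relation induced by the hyperedges. -/
def BiRel (H : Set (Set V)) : V → V → Prop :=
  fun x y => x ≠ y ∧ ({x, y} : Set V) ∈ H

/-- (generalized) moralization of a HEDG: `v — w` iff there are `a`, `b` with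
`v ∈ {a} ∪ Pa(a)`, `w ∈ {b} ∪ Pa(b)` and a bidirected chain `a ↔ ⋯ ↔ b`. -/
def MoralE (E : V → V → Prop) (H : Set (Set V)) : V → V → Prop :=
  fun v w => v ≠ w ∧ ∃ a b, (v = a ∨ E v a) ∧ (w = b ∨ E w b) ∧
    Relation.ReflTransGen (BiRel H) a b

/-- moralization of a directed graph: undirected versions of the directed edges plus
edges between distinct parents of a common child. -/
def MoralDirE (E : V → V → Prop) : V → V → Prop :=
  fun v w => v ≠ w ∧ (E v w ∨ E w v ∨ ∃ c, E v c ∧ E w c)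

/-- marginalization of an undirected graph `A` w.r.t. `W`: `a — b` iff there is a path
from `a` to `b` with all intermediate nodes in `W`. -/
def MargUnd (A : V → V → Prop) (W : Set V) : V → V → Prop :=
  fun a b => a ∉ W ∧ b ∉ W ∧ a ≠ b ∧
    ∃ c, Relation.ReflTransGen (fun x y => A x y ∧ y ∈ W) a c ∧ A c b

/-- separation in an undirected graph: every path from `X` to `Y` contains a node of
`Z` (including the endnodes). -/
def USep (A : V → V → Prop) (X Y Z : Set V) : Prop :=
  ∀ x ∈ X, ∀ y ∈ Y,
    ¬ (x ∉ Z ∧ Relation.ReflTransGen (fun a b => A a b ∧ b ∉ Z) x y)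

/-- edges of the induced sub-HEDG on `A`. -/
def InducedE (E : V → V → Prop) (A : Set V) : V → V → Prop :=
  fun a b => a ∈ A ∧ b ∈ A ∧ E a b

/-- hyperedges of the induced sub-HEDG on `A`. -/
def InducedH (H : Set (Set V)) (A : Set V) : Set (Set V) := {F | F ∈ H ∧ F ⊆ A}

/-- `F` is an inclusion-maximal hyperedge of `H`. -/
def MaximalHyperedge (H : Set (Set V)) (F : Set V) : Prop :=
  F ∈ H ∧ ∀ F' ∈ H, F ⊆ F' → F' = F

/-- edges of the augmented directed graph of a HEDG: the original directed edges plus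
`e_F → v` for every maximal hyperedge `F` and every `v ∈ F`. -/
def AugE (E : V → V → Prop) (H : Set (Set V)) :
    V ⊕ {F : Set V // MaximalHyperedge H F} →
    V ⊕ {F : Set V // MaximalHyperedge H F} → Prop
  | .inl v, .inl w => E v w
  | .inr F, .inl v => v ∈ F.1
  | _, _ => False

/-- the trivial simplicial complex (only subsingleton hyperedges), making a directed
graph a HEDG without bidirected edges. -/
def TrivialH (W : Type*) : Set (Set W) := {F | Set.Subsingleton F}

/-- directed edges of the acyclification of a HEDG. -/
def AcyE (E : V → V → Prop) : V → V → Prop :=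
  fun v w => ¬ InSC E v w ∧ ∃ w', InSC E w w' ∧ E v w'

/-- hyperedges of the acyclification of a HEDG. -/
def AcyH (E : V → V → Prop) (H : Set (Set V)) : Set (Set V) :=
  {F' | ∃ F ∈ H, ∀ x ∈ F', ∃ v ∈ F, InSC E v x}


section Aux

lemma biRel_symm (H : Set (Set V)) : Symmetric (BiRel H) := by
  intro x y h
  exact ⟨h.1.symm, by rw [Set.pair_comm]; exact h.2⟩

lemma biChain_symm {H : Set (Set V)} {x y : V}
    (h : Relation.ReflTransGen (BiRel H) x y) :
    Relation.ReflTransGen (BiRel H) y x :=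
  (@Relation.ReflTransGen.stdSymm _ (BiRel H) ⟨fun a b hab => biRel_symm H hab⟩).symm _ _ h

/-- `z` is the “image” of `y` after marginalizing out `U`: either `y` survives and
`z = y`, or `y ∈ U` and `z ∉ U` is reached from `y` by a directed path through `U`. -/
def LiftsTo (E : V → V → Prop) (U : Set V) (y z : V) : Prop :=
  (y ∉ U ∧ z = y) ∨
  (y ∈ U ∧ z ∉ U ∧ ∃ c, Relation.ReflTransGen (fun a b => E a b ∧ b ∈ U) y c ∧ E c z)

lemma exit_lemma {E : V → V → Prop} {U : Set V} {v : V} (hv : v ∉ U) :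
    ∀ {y : V}, Reach E y v → y ∈ U →
      ∃ z, z ∉ U ∧ ∃ c, Relation.ReflTransGen (fun a b => E a b ∧ b ∈ U) y c ∧ E c z := by
  intro y hy
  induction hy using Relation.ReflTransGen.head_induction_on with
  | refl => intro h; exact absurd h hv
  | @head y m h _ ih =>
    intro _
    by_cases hm : m ∈ U
    · obtain ⟨z, hz, c, hchain, hcz⟩ := ih hm
      exact ⟨z, hz, c, Relation.ReflTransGen.head ⟨h, hm⟩ hchain, hcz⟩
    · exact ⟨m, hm, y, Relation.ReflTransGen.refl, h⟩

lemma exists_lift {E : V → V → Prop} {U : Set V} {y v : V}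
    (hy : Reach E y v) (hv : v ∉ U) : ∃ z, LiftsTo E U y z := by
  by_cases hyU : y ∈ U
  · obtain ⟨z, hz, c, hchain, hcz⟩ := exit_lemma hv hy hyU
    exact ⟨z, Or.inr ⟨hyU, hz, c, hchain, hcz⟩⟩
  · exact ⟨y, Or.inl ⟨hyU, rfl⟩⟩

lemma liftsTo_not_mem {E : V → V → Prop} {U : Set V} {y z : V}
    (h : LiftsTo E U y z) : z ∉ U := by
  rcases h with ⟨hy, rfl⟩ | ⟨_, hz, _⟩ <;> assumption

lemma lift_edge {E : V → V → Prop} {H : Set (Set V)} {U : Set V} {x y zx zy : V}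
    (hxy : x ≠ y) (hmem : ({x, y} : Set V) ∈ H)
    (hx : LiftsTo E U x zx) (hy : LiftsTo E U y zy) :
    zx = zy ∨ BiRel (MargH E H U) zx zy := by
  by_cases h : zx = zy
  · exact Or.inl h
  refine Or.inr ⟨h, ?_, {x, y}, hmem, ?_, ?_⟩
  · intro w hw
    rcases hw with rfl | hw
    · exact liftsTo_not_mem hx
    · rcases hw with rfl; exact liftsTo_not_mem hy
  · intro w hw
    rcases hw with rfl | hw
    · rcases hx with ⟨hxU, rfl⟩ | ⟨hxU, _, _⟩
      · exact Or.inl (Or.inl rfl)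
      · exact Or.inr hxU
    · rcases hw with rfl
      rcases hy with ⟨hyU, rfl⟩ | ⟨hyU, _, _⟩
      · exact Or.inl (Or.inr rfl)
      · exact Or.inr hyU
  · intro w hw
    rcases hw with rfl | hw
    · rcases hx with ⟨hxU, rfl⟩ | ⟨hxU, _, c, hchain, hcz⟩
      · exact Or.inl ⟨Or.inl rfl, hxU⟩
      · exact Or.inr ⟨x, ⟨Or.inl rfl, hxU⟩, c, hchain, hcz⟩
    · rcases hw with rfl
      rcases hy with ⟨hyU, rfl⟩ | ⟨hyU, _, c, hchain, hcz⟩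
      · exact Or.inl ⟨Or.inr rfl, hyU⟩
      · exact Or.inr ⟨y, ⟨Or.inr rfl, hyU⟩, c, hchain, hcz⟩

lemma chain_lift {E : V → V → Prop} {H : Set (Set V)} {U : Set V} {v p : V}
    (hv : v ∉ U) (hp : p ∉ U)
    (hchain : Relation.ReflTransGen
      (fun x y => x ≠ y ∧ ({x, y} : Set V) ∈ H ∧ Reach E x v ∧ Reach E y v) v p) :
    Relation.ReflTransGen (BiRel (MargH E H U)) v p := by
  suffices h : ∀ x, Relation.ReflTransGen
      (fun x y => x ≠ y ∧ ({x, y} : Set V) ∈ H ∧ Reach E x v ∧ Reach E y v) x p →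
      ∀ zx, LiftsTo E U x zx →
      Relation.ReflTransGen (BiRel (MargH E H U)) zx p by
    exact h v hchain v (Or.inl ⟨hv, rfl⟩)
  intro x hx
  induction hx using Relation.ReflTransGen.head_induction_on with
  | refl =>
    intro zx hzx
    rcases hzx with ⟨_, rfl⟩ | ⟨hpU, _⟩
    · exact Relation.ReflTransGen.refl
    · exact absurd hpU hp
  | @head x y h _ ih =>
    intro zx hzx
    obtain ⟨hne, hH2, _, hyv⟩ := h
    obtain ⟨zy, hzy⟩ := exists_lift hyv hv
    rcases lift_edge hne hH2 hzx hzy with heq | hbi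
    · rw [heq]; exact ih zy hzy
    · exact Relation.ReflTransGen.head hbi (ih zy hzy)

end Aux

/-- If in a HEDG every strongly connected component `S` lies entirely
within a single district of its ancestral closure `Anc^G(S)`, then every
pseudo-topological total order of `G` is a perfect elimination order: for every node `v`
and every ancestral subset `A` of the marginalization of `G` onto the predecessors of
`v` with `v ∈ A`, the set `∂_{A^moral}(v) ∪ {v}` is a complete subgraph of `A^moral`
(where `A` carries the marginalized HEDG structure). -/
theorem pseudoTopological_is_perfectElimination {V : Type*} [Fintype V] [LinearOrder V]
    (E : V → V → Prop) (H : Set (Set V)) (hH : IsSimplicial H)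
    (hdistrict : ∀ v w : V, InSC E v w →
      Relation.ReflTransGen
        (fun x y => x ≠ y ∧ ({x, y} : Set V) ∈ H ∧ Reach E x v ∧ Reach E y v) v w)
    (hpt : ∀ v w : V, Reach E w v → ¬ InSC E w v → w < v) :
    ∀ v : V, ∀ A : Set V, v ∈ A → A ⊆ {w | w ≤ v} →
      (∀ a ∈ A, ∀ u : V, Relation.ReflTransGen (MargE E {w | ¬ w ≤ v}) u a → u ∈ A) →
      ∀ a b : V,
        a ∈ insert v {w | MoralE (MargE E Aᶜ) (MargH E H Aᶜ) v w} →
        b ∈ insert v {w | MoralE (MargE E Aᶜ) (MargH E H Aᶜ) v w} →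
        a ≠ b → MoralE (MargE E Aᶜ) (MargH E H Aᶜ) a b := by
  intro v A hvA hAle _ a b ha hb hab
  have hvU : v ∉ Aᶜ := fun h => h hvA
  -- key: a marginal parent of `v` is connected to `v` by a bidirected chain
  have key : ∀ p : V, MargE E Aᶜ v p →
      Relation.ReflTransGen (BiRel (MargH E H Aᶜ)) v p := by
    intro p hp
    obtain ⟨_, hpU, c, hchain, hcp⟩ := hp
    have hreach : Reach E v p :=
      Relation.ReflTransGen.tail
        (Relation.ReflTransGen.mono (fun x y h => h.1) _ _ hchain) hcp
    have hpA : p ∈ A := not_not.mp hpU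
    have hple : p ≤ v := hAle hpA
    have hinsc : InSC E v p := by
      by_contra hnsc
      exact absurd hple (not_le.mpr (hpt p v hreach hnsc))
    exact chain_lift hvU hpU (hdistrict v p hinsc)
  have key' : ∀ p : V, (v = p ∨ MargE E Aᶜ v p) →
      Relation.ReflTransGen (BiRel (MargH E H Aᶜ)) v p := by
    rintro p (rfl | hp)
    · exact Relation.ReflTransGen.refl
    · exact key p hp
  -- from membership, extract a chain from `v` to a “parent-target” of the node
  have wit : ∀ w : V, w ∈ insert v {w | MoralE (MargE E Aᶜ) (MargH E H Aᶜ) v w} →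
      ∃ q, (w = q ∨ MargE E Aᶜ w q) ∧
        Relation.ReflTransGen (BiRel (MargH E H Aᶜ)) v q := by
    rintro w (rfl | hw)
    · exact ⟨w, Or.inl rfl, Relation.ReflTransGen.refl⟩
    · obtain ⟨_, p, q, hvp, hwq, hchain⟩ := hw
      exact ⟨q, hwq, (key' p hvp).trans hchain⟩
  obtain ⟨qa, hqa, hchaina⟩ := wit a ha
  obtain ⟨qb, hqb, hchainb⟩ := wit b hb
  exact ⟨hab, qa, qb, hqa, hqb, (biChain_symm hchaina).trans hchainb⟩

end HedgPaper
end

section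
/- d-separation in a HEDG satisfies the compositional graphoid axioms: symmetry, decomposition, weak union, contraction, intersection (for pairwise disjoint sets), and composition. In particular, for all X,Y,Z,W ⊆ V: (X ⟂_G^d Y | Z) ∧ (X ⟂_G^d W | Z) implies X ⟂_G^d Y∪W | Z, and (X ⟂_G^d Y | W∪Z) ∧ (X ⟂_G^d W | Z) implies X ⟂_G^d Y∪W | Z. -/
namespace HedgPaper

variable {V : Type*}

section DSepAux

variable {V : Type*} {E : V → V → Prop} {H : Set (Set V)}

/-- the openness condition for a pair of consecutive steps. -/
def OpenPair (E : V → V → Prop) (Z : Set V) (s t : Step V) : Prop :=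
  ((s.HeadAtDst ∧ t.HeadAtSrc) → s.dst ∈ AncSet E Z) ∧
  (¬ (s.HeadAtDst ∧ t.HeadAtSrc) → s.dst ∉ Z)

lemma dOpen_iff_chain' {Z : Set V} :
    ∀ l : List (Step V), DInteriorOpen E Z l ↔ l.IsChain (OpenPair E Z)
  | [] => by simp [DInteriorOpen]
  | [s] => by simp [DInteriorOpen]
  | s :: t :: l => by
    rw [List.isChain_cons_cons]
    simp only [DInteriorOpen, OpenPair]
    rw [dOpen_iff_chain' (t :: l)]
    tauto

lemma mem_ancSet_self {Z : Set V} {v : V} (h : v ∈ Z) : v ∈ AncSet E Z :=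
  ⟨v, h, Relation.ReflTransGen.refl⟩

lemma ancSet_mono {Z Z' : Set V} (h : Z ⊆ Z') : AncSet E Z ⊆ AncSet E Z' :=
  fun _ ⟨z, hz, hr⟩ => ⟨z, h hz, hr⟩

lemma not_ancSet_step {Z : Set V} {v w : V} (h : v ∉ AncSet E Z) (he : E v w) :
    w ∉ AncSet E Z :=
  fun ⟨z, hz, hr⟩ => h ⟨z, hz, Relation.ReflTransGen.head he hr⟩

lemma not_mem_of_not_ancSet {Z : Set V} {v : V} (h : v ∉ AncSet E Z) : v ∉ Z :=
  fun hz => h (mem_ancSet_self hz)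

lemma isWalk_append {l₁ l₂ : List (Step V)} {x m y : V}
    (h1 : IsWalk E H l₁ x m) (h2 : IsWalk E H l₂ m y) : IsWalk E H (l₁ ++ l₂) x y := by
  induction l₁ generalizing x with
  | nil => cases h1; exact h2
  | cons s l ih => exact ⟨h1.1, h1.2.1, ih h1.2.2⟩

/-- reversal of a step direction. -/
def EDir.rev : EDir → EDir
  | .fwd => .bwd
  | .bwd => .fwd
  | .bi => .bi

/-- reversal of a step. -/
def Step.rev (s : Step V) : Step V := ⟨s.dst, s.dir.rev, s.src⟩

lemma Step.rev_valid {s : Step V} (h : s.Valid E H) : s.rev.Valid E H := by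
  obtain ⟨a, d, b⟩ := s
  cases d with
  | fwd => exact h
  | bwd => exact h
  | bi =>
    refine ⟨h.1.symm, ?_⟩
    show ({b, a} : Set V) ∈ H
    rw [Set.pair_comm]
    exact h.2

lemma Step.rev_headAtDst {s : Step V} : s.rev.HeadAtDst ↔ s.HeadAtSrc := by
  obtain ⟨a, d, b⟩ := s
  cases d <;> simp [Step.rev, EDir.rev, Step.HeadAtDst, Step.HeadAtSrc]

lemma Step.rev_headAtSrc {s : Step V} : s.rev.HeadAtSrc ↔ s.HeadAtDst := by
  obtain ⟨a, d, b⟩ := s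
  cases d <;> simp [Step.rev, EDir.rev, Step.HeadAtDst, Step.HeadAtSrc]

lemma isWalk_rev {l : List (Step V)} {x y : V} (h : IsWalk E H l x y) :
    IsWalk E H ((l.map Step.rev).reverse) y x := by
  induction l generalizing x with
  | nil => exact h.symm
  | cons s l ih =>
    have : ((s :: l).map Step.rev).reverse = (l.map Step.rev).reverse ++ [s.rev] := by
      simp
    rw [this]
    exact isWalk_append (ih h.2.2) ⟨rfl, Step.rev_valid h.2.1, h.1⟩

lemma chain'_openPair_rev {Z : Set V} {l : List (Step V)} {x y : V}
    (hw : IsWalk E H l x y) (hc : l.IsChain (OpenPair E Z)) :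
    ((l.map Step.rev).reverse).IsChain (OpenPair E Z) := by
  induction l generalizing x with
  | nil => simp
  | cons s l ih =>
    have he : ((s :: l).map Step.rev).reverse = (l.map Step.rev).reverse ++ [s.rev] := by
      simp
    rw [he, List.isChain_append]
    refine ⟨ih hw.2.2 (List.isChain_cons.mp hc).2, List.isChain_singleton _, ?_⟩
    intro a ha b hb
    rw [List.getLast?_reverse, List.head?_map] at ha
    cases l with
    | nil => simp at ha
    | cons t r =>
      simp only [List.head?_cons, Option.map_some] at ha
      simp only [List.head?_cons, Option.mem_def, Option.some.injEq] at ha hb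
      subst ha; subst hb
      have hst : OpenPair E Z s t := (List.isChain_cons_cons.mp hc).1
      have hts : t.src = s.dst := hw.2.2.1
      constructor
      · intro ⟨h1, h2⟩
        rw [Step.rev_headAtDst] at h1
        rw [Step.rev_headAtSrc] at h2
        show t.src ∈ AncSet E Z
        rw [hts]
        exact hst.1 ⟨h2, h1⟩
      · intro hnc
        rw [Step.rev_headAtDst, Step.rev_headAtSrc] at hnc
        show t.src ∉ Z
        rw [hts]
        exact hst.2 (fun ⟨h1, h2⟩ => hnc ⟨h2, h1⟩)

lemma chain'_and {R R' : Step V → Step V → Prop} :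
    ∀ {l : List (Step V)}, l.IsChain R → l.IsChain R' →
      l.IsChain (fun a b => R a b ∧ R' a b) := by
  intro l
  induction l with
  | nil => simp
  | cons a l ih =>
    intro h1 h2
    rw [List.isChain_cons] at h1 h2 ⊢
    exact ⟨fun b hb => ⟨h1.1 b hb, h2.1 b hb⟩, ih h1.2 h2.2⟩

lemma chain'_openPair_combine {Z S W : Set V} {l : List (Step V)} (hWS : W ⊆ S)
    (h1 : l.IsChain (OpenPair E Z)) (h2 : l.IsChain (OpenPair E (S ∪ Z))) :
    l.IsChain (OpenPair E (W ∪ Z)) := by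
  refine (chain'_and h1 h2).imp (fun a b ⟨hz, hsz⟩ => ?_)
  refine ⟨fun hc => ancSet_mono Set.subset_union_right (hz.1 hc), fun hnc hmem => ?_⟩
  exact hsz.2 hnc (Set.union_subset_union_left Z hWS hmem)

/-- cutting a `Z`-open walk at the first non-collider lying in `S`. -/
lemma prefix_lemma {Z : Set V} (S : Set V) :
    ∀ (l : List (Step V)) (x u : V), IsWalk E H l x u → l.IsChain (OpenPair E Z) →
    u ∈ S → u ∉ Z →
    ∃ v ∈ S, v ∉ Z ∧ ∃ l', IsWalk E H l' x v ∧ l'.IsChain (OpenPair E Z) ∧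
      l'.IsChain (OpenPair E (S ∪ Z)) ∧ l'.head? = l.head? := by
  intro l
  induction l with
  | nil =>
    intro x u hw _ hu huZ
    exact ⟨u, hu, huZ, [], hw, by simp, by simp, rfl⟩
  | cons s r ih =>
    intro x u hw hc hu huZ
    cases r with
    | nil =>
      exact ⟨u, hu, huZ, [s], hw, List.isChain_singleton _, List.isChain_singleton _, rfl⟩
    | cons t r' =>
      have hst : OpenPair E Z s t := (List.isChain_cons_cons.mp hc).1
      have hc' : (t :: r').IsChain (OpenPair E Z) := (List.isChain_cons_cons.mp hc).2
      by_cases hcol : s.HeadAtDst ∧ t.HeadAtSrc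
      · -- collider at s.dst: recurse
        obtain ⟨v, hvS, hvZ, l'', hw'', hcZ, hcSZ, hhd⟩ :=
          ih s.dst u hw.2.2 hc' hu huZ
        refine ⟨v, hvS, hvZ, s :: l'', ⟨hw.1, hw.2.1, hw''⟩, ?_, ?_, rfl⟩
        · rw [List.isChain_cons]
          refine ⟨fun b hb => ?_, hcZ⟩
          rw [hhd] at hb
          simp only [List.head?_cons, Option.mem_def, Option.some.injEq] at hb
          subst hb; exact hst
        · rw [List.isChain_cons]
          refine ⟨fun b hb => ?_, hcSZ⟩
          rw [hhd] at hb
          simp only [List.head?_cons, Option.mem_def, Option.some.injEq] at hb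
          subst hb
          exact ⟨fun _ => ancSet_mono Set.subset_union_right (hst.1 hcol),
            fun h => absurd hcol h⟩
      · by_cases hS : s.dst ∈ S
        · -- cut here
          exact ⟨s.dst, hS, hst.2 hcol, [s], ⟨hw.1, hw.2.1, rfl⟩,
            List.isChain_singleton _, List.isChain_singleton _, rfl⟩
        · -- recurse
          obtain ⟨v, hvS, hvZ, l'', hw'', hcZ, hcSZ, hhd⟩ :=
            ih s.dst u hw.2.2 hc' hu huZ
          refine ⟨v, hvS, hvZ, s :: l'', ⟨hw.1, hw.2.1, hw''⟩, ?_, ?_, rfl⟩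
          · rw [List.isChain_cons]
            refine ⟨fun b hb => ?_, hcZ⟩
            rw [hhd] at hb
            simp only [List.head?_cons, Option.mem_def, Option.some.injEq] at hb
            subst hb; exact hst
          · rw [List.isChain_cons]
            refine ⟨fun b hb => ?_, hcSZ⟩
            rw [hhd] at hb
            simp only [List.head?_cons, Option.mem_def, Option.some.injEq] at hb
            subst hb
            exact ⟨fun h => absurd h hcol,
              fun _ hmem => hmem.elim hS (hst.2 hcol)⟩

/-- a directed, `Z`-open tail from an ancestor of `W ∪ Z` that is not an ancestor
of `Z`, ending in `W`. -/
lemma dir_tail {W Z : Set V} {c : V} (hreach : c ∈ AncSet E (W ∪ Z))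
    (hc : c ∉ AncSet E Z) :
    ∃ w ∈ W, w ∉ Z ∧ ∃ tl : List (Step V), IsWalk E H tl c w ∧
      tl.IsChain (OpenPair E Z) ∧ ∀ s ∈ tl, s.dir = EDir.fwd := by
  obtain ⟨t, htWZ, hr⟩ := hreach
  revert hc
  induction hr using Relation.ReflTransGen.head_induction_on with
  | refl =>
    intro hc
    have htZ : t ∉ Z := not_mem_of_not_ancSet hc
    exact ⟨t, htWZ.resolve_right htZ, htZ, [], rfl, by simp, by simp⟩
  | head he hr ih =>
    rename_i a b
    intro hc
    have hb : b ∉ AncSet E Z := not_ancSet_step hc he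
    obtain ⟨w, hwW, hwZ, tl, hwalk, hchain, hfwd⟩ := ih hb
    refine ⟨w, hwW, hwZ, ⟨a, .fwd, b⟩ :: tl, ⟨rfl, he, hwalk⟩, ?_, ?_⟩
    · rw [List.isChain_cons]
      refine ⟨fun u hu => ?_, hchain⟩
      have hud : u.dir = EDir.fwd := hfwd u (List.mem_of_mem_head? hu)
      have : ¬ u.HeadAtSrc := by
        rw [Step.HeadAtSrc, hud]; rintro (h | h) <;> exact EDir.noConfusion h
      exact ⟨fun h => absurd h.2 this, fun _ => not_mem_of_not_ancSet hb⟩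
    · intro u hu
      rcases List.mem_cons.mp hu with rfl | hu
      · rfl
      · exact hfwd u hu

/-- the weak-union walk surgery: from a `(W ∪ Z)`-open walk ending in `T`,
obtain a `Z`-open walk ending in `W ∪ T`. -/
lemma weak_union_walk {Z : Set V} (W T : Set V) :
    ∀ (l : List (Step V)) (x y : V), IsWalk E H l x y →
      l.IsChain (OpenPair E (W ∪ Z)) → y ∉ Z → y ∈ T →
      ∃ v, (v ∈ W ∪ T) ∧ v ∉ Z ∧ ∃ l', IsWalk E H l' x v ∧
        l'.IsChain (OpenPair E Z) ∧ l'.head? = l.head? := by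
  intro l
  induction l with
  | nil =>
    intro x y hw _ hyZ hyT
    exact ⟨y, Or.inr hyT, hyZ, [], hw, by simp, rfl⟩
  | cons s r ih =>
    intro x y hw hc hyZ hyT
    cases r with
    | nil =>
      exact ⟨y, Or.inr hyT, hyZ, [s], hw, List.isChain_singleton _, rfl⟩
    | cons t r' =>
      have hst : OpenPair E (W ∪ Z) s t := (List.isChain_cons_cons.mp hc).1
      have hc' : (t :: r').IsChain (OpenPair E (W ∪ Z)) := (List.isChain_cons_cons.mp hc).2
      by_cases hcol : s.HeadAtDst ∧ t.HeadAtSrc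
      · by_cases hanc : s.dst ∈ AncSet E Z
        · obtain ⟨v, hv, hvZ, l'', hw'', hcZ, hhd⟩ := ih s.dst y hw.2.2 hc' hyZ hyT
          refine ⟨v, hv, hvZ, s :: l'', ⟨hw.1, hw.2.1, hw''⟩, ?_, rfl⟩
          rw [List.isChain_cons]
          refine ⟨fun b hb => ?_, hcZ⟩
          rw [hhd] at hb
          simp only [List.head?_cons, Option.mem_def, Option.some.injEq] at hb
          subst hb
          exact ⟨fun _ => hanc, fun h => absurd hcol h⟩
        · -- divert into a directed tail
          have hmem : s.dst ∈ AncSet E (W ∪ Z) := hst.1 hcol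
          obtain ⟨w, hwW, hwZ, tl, hwalk, hchain, hfwd⟩ := dir_tail hmem hanc
          refine ⟨w, Or.inl hwW, hwZ, s :: tl, ⟨hw.1, hw.2.1, hwalk⟩, ?_, rfl⟩
          rw [List.isChain_cons]
          refine ⟨fun b hb => ?_, hchain⟩
          have hbd : b.dir = EDir.fwd := hfwd b (List.mem_of_mem_head? hb)
          have hns : ¬ b.HeadAtSrc := by
            rw [Step.HeadAtSrc, hbd]; rintro (h | h) <;> exact EDir.noConfusion h
          exact ⟨fun h => absurd h.2 hns, fun _ => not_mem_of_not_ancSet hanc⟩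
      · have hnm : s.dst ∉ W ∪ Z := hst.2 hcol
        obtain ⟨v, hv, hvZ, l'', hw'', hcZ, hhd⟩ := ih s.dst y hw.2.2 hc' hyZ hyT
        refine ⟨v, hv, hvZ, s :: l'', ⟨hw.1, hw.2.1, hw''⟩, ?_, rfl⟩
        rw [List.isChain_cons]
        refine ⟨fun b hb => ?_, hcZ⟩
        rw [hhd] at hb
        simp only [List.head?_cons, Option.mem_def, Option.some.injEq] at hb
        subst hb
        exact ⟨fun h => absurd h hcol, fun _ hz => hnm (Or.inr hz)⟩

end DSepAux


/-- d-separation in a HEDG satisfies the compositional graphoid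
axioms: symmetry, decomposition, weak union, contraction, intersection (for pairwise
disjoint sets) and composition. -/
theorem dSep_compositional_graphoid {V : Type*} [Fintype V]
    (E : V → V → Prop) (H : Set (Set V)) (hH : IsSimplicial H) :
    (∀ X Y Z : Set V, DSep E H X Y Z → DSep E H Y X Z) ∧
    (∀ X Y W Z : Set V, DSep E H X (Y ∪ W) Z → DSep E H X Y Z) ∧
    (∀ X Y W Z : Set V, DSep E H X (Y ∪ W) Z → DSep E H X Y (W ∪ Z)) ∧
    (∀ X Y W Z : Set V,
      DSep E H X Y (W ∪ Z) → DSep E H X W Z → DSep E H X (Y ∪ W) Z) ∧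
    (∀ X Y W Z : Set V, Disjoint X Y → Disjoint X W → Disjoint X Z →
      Disjoint Y W → Disjoint Y Z → Disjoint W Z →
      DSep E H X Y (W ∪ Z) → DSep E H X W (Y ∪ Z) → DSep E H X (Y ∪ W) Z) ∧
    (∀ X Y W Z : Set V, DSep E H X Y Z → DSep E H X W Z → DSep E H X (Y ∪ W) Z) := by
  classical
  refine ⟨?_, ?_, ?_, ?_, ?_, ?_⟩
  · -- symmetry
    intro X Y Z h y hy x hx l hw hcon
    obtain ⟨hyZ, hxZ, hop⟩ := hcon
    exact h x hx y hy _ (isWalk_rev hw)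
      ⟨hxZ, hyZ, (dOpen_iff_chain' _).mpr
        (chain'_openPair_rev hw ((dOpen_iff_chain' _).mp hop))⟩
  · -- decomposition
    intro X Y W Z h x hx y hy
    exact h x hx y (Or.inl hy)
  · -- weak union
    intro X Y W Z h x hx y hy l hw hcon
    obtain ⟨hx1, hy1, hop⟩ := hcon
    obtain ⟨v, hv, hvZ, l', hw', hc', -⟩ :=
      weak_union_walk W Y l x y hw ((dOpen_iff_chain' _).mp hop)
        (fun hz => hy1 (Or.inr hz)) hy
    exact h x hx v (hv.elim Or.inr Or.inl) l' hw'
      ⟨fun hz => hx1 (Or.inr hz), hvZ, (dOpen_iff_chain' _).mpr hc'⟩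
  · -- contraction
    intro X Y W Z h1 h2 x hx u hu l hw hcon
    obtain ⟨hxZ, huZ, hop⟩ := hcon
    have hxW : x ∉ W := fun hxW => h2 x hx x hxW [] rfl ⟨hxZ, hxZ, trivial⟩
    obtain ⟨v, hvS, hvZ, l', hw', hcZ, hcSZ, -⟩ :=
      prefix_lemma (Y ∪ W) l x u hw ((dOpen_iff_chain' _).mp hop) hu huZ
    by_cases hvW : v ∈ W
    · exact h2 x hx v hvW l' hw' ⟨hxZ, hvZ, (dOpen_iff_chain' _).mpr hcZ⟩
    · exact h1 x hx v (hvS.resolve_right hvW) l' hw'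
        ⟨fun hz => hz.elim hxW hxZ, fun hz => hz.elim hvW hvZ,
          (dOpen_iff_chain' _).mpr
            (chain'_openPair_combine Set.subset_union_right hcZ hcSZ)⟩
  · -- intersection
    intro X Y W Z hXY hXW hXZ hYW hYZ hWZ h1 h2 x hx u hu l hw hcon
    obtain ⟨hxZ, huZ, hop⟩ := hcon
    obtain ⟨v, hvS, hvZ, l', hw', hcZ, hcSZ, -⟩ :=
      prefix_lemma (Y ∪ W) l x u hw ((dOpen_iff_chain' _).mp hop) hu huZ
    rcases hvS with hvY | hvW
    · exact h1 x hx v hvY l' hw'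
        ⟨fun hz => hz.elim (Set.disjoint_left.mp hXW hx) hxZ,
         fun hz => hz.elim (Set.disjoint_left.mp hYW hvY) hvZ,
         (dOpen_iff_chain' _).mpr
           (chain'_openPair_combine Set.subset_union_right hcZ hcSZ)⟩
    · exact h2 x hx v hvW l' hw'
        ⟨fun hz => hz.elim (Set.disjoint_left.mp hXY hx) hxZ,
         fun hz => hz.elim (Set.disjoint_right.mp hYW hvW) hvZ,
         (dOpen_iff_chain' _).mpr
           (chain'_openPair_combine Set.subset_union_left hcZ hcSZ)⟩
  · -- composition
    intro X Y W Z h1 h2 x hx u hu l hw hcon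
    rcases hu with hY | hW
    · exact h1 x hx u hY l hw hcon
    · exact h2 x hx u hW l hw hcon


end HedgPaper
end

section
/- Conditional independence of random variables with a strictly positive joint density satisfies the intersection property: if X,Y,Z,W are pairwise disjoint sets of coordinates of a probability distribution P on a product of standard Borel spaces that admits a strictly positive density with respect to a product measure, then (X ⟂_P Y | W∪Z) and (X ⟂_P W | Y∪Z) together imply X ⟂_P Y∪W | Z. -/
open MeasureTheory ProbabilityTheory

section IntersectionHelpers

open Set


section Helpers

variable {Ω : Type*}

/-- Truncation of a real number to `[0,1]`. -/
noncomputable def trunc01 (x : ℝ) : ℝ := max 0 (min x 1)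

lemma trunc01_nonneg (x : ℝ) : 0 ≤ trunc01 x := le_max_left _ _

lemma trunc01_le_one (x : ℝ) : trunc01 x ≤ 1 :=
  max_le zero_le_one (min_le_right _ _)

lemma trunc01_of_mem {x : ℝ} (h0 : 0 ≤ x) (h1 : x ≤ 1) : trunc01 x = x := by
  unfold trunc01; rw [min_eq_left h1, max_eq_right h0]

lemma continuous_trunc01 : Continuous trunc01 :=
  continuous_const.max (continuous_id.min continuous_const)

/-- Uniqueness of conditional expectation with respect to a supremum of two σ-algebras,
checked on the generating π-system of intersections. -/
lemma condexp_sup_unique {ma mb : MeasurableSpace Ω} {m0 : MeasurableSpace Ω}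
    (μ : Measure Ω) [IsProbabilityMeasure μ] (hma : ma ≤ m0) (hmb : mb ≤ m0)
    {f c : Ω → ℝ} (hf_int : Integrable f μ) (hc_int : Integrable c μ)
    (hf0 : 0 ≤ᵐ[μ] f) (hc0 : 0 ≤ᵐ[μ] c)
    (hc_meas : StronglyMeasurable[ma ⊔ mb] c)
    (heq : ∀ s t, MeasurableSet[ma] s → MeasurableSet[mb] t →
      ∫ x in s ∩ t, f x ∂μ = ∫ x in s ∩ t, c x ∂μ) :
    μ[f | ma ⊔ mb] =ᵐ[μ] c := by
  have hm : ma ⊔ mb ≤ m0 := sup_le hma hmb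
  set C : Set (Set Ω) := {u | ∃ s t, MeasurableSet[ma] s ∧ MeasurableSet[mb] t ∧ u = s ∩ t}
    with hC
  have hgen : ma ⊔ mb = MeasurableSpace.generateFrom C := by
    refine le_antisymm (sup_le ?_ ?_) (MeasurableSpace.generateFrom_le ?_)
    · intro s hs
      exact MeasurableSpace.measurableSet_generateFrom
        ⟨s, univ, hs, MeasurableSet.univ, (inter_univ s).symm⟩
    · intro t ht
      exact MeasurableSpace.measurableSet_generateFrom
        ⟨univ, t, MeasurableSet.univ, ht, (univ_inter t).symm⟩
    · rintro u ⟨s, t, hs, ht, rfl⟩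
      exact ((le_sup_left : ma ≤ ma ⊔ mb) _ hs).inter ((le_sup_right : mb ≤ ma ⊔ mb) _ ht)
  have hpi : IsPiSystem C := by
    rintro u ⟨s, t, hs, ht, rfl⟩ u' ⟨s', t', hs', ht', rfl⟩ -
    exact ⟨s ∩ s', t ∩ t', hs.inter hs', ht.inter ht', inter_inter_inter_comm s t s' t'⟩
  -- integral identity over all sets of `ma ⊔ mb`
  have key : ∀ u, MeasurableSet[ma ⊔ mb] u → ∫ x in u, f x ∂μ = ∫ x in u, c x ∂μ := by
    have hFf : IsFiniteMeasure (μ.withDensity fun x => ENNReal.ofReal (f x)) := by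
      constructor
      rw [withDensity_apply _ MeasurableSet.univ, Measure.restrict_univ,
        ← ofReal_integral_eq_lintegral_ofReal hf_int hf0]
      exact ENNReal.ofReal_lt_top
    have hFc : IsFiniteMeasure (μ.withDensity fun x => ENNReal.ofReal (c x)) := by
      constructor
      rw [withDensity_apply _ MeasurableSet.univ, Measure.restrict_univ,
        ← ofReal_integral_eq_lintegral_ofReal hc_int hc0]
      exact ENNReal.ofReal_lt_top
    have hval : ∀ (g : Ω → ℝ), Integrable g μ → 0 ≤ᵐ[μ] g → ∀ u, MeasurableSet[ma ⊔ mb] u →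
        ((μ.withDensity fun x => ENNReal.ofReal (g x)).trim hm) u
          = ENNReal.ofReal (∫ x in u, g x ∂μ) := by
      intro g hg_int hg0 u hu
      rw [trim_measurableSet_eq hm hu, withDensity_apply _ (hm u hu),
        ← ofReal_integral_eq_lintegral_ofReal hg_int.integrableOn (ae_restrict_of_ae hg0)]
    have htrim : ((μ.withDensity fun x => ENNReal.ofReal (f x)).trim hm)
        = ((μ.withDensity fun x => ENNReal.ofReal (c x)).trim hm) := by
      haveI : IsFiniteMeasure ((μ.withDensity fun x => ENNReal.ofReal (f x)).trim hm) :=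
        isFiniteMeasure_trim hm
      have heq_univ : ∫ x in (univ : Set Ω), f x ∂μ = ∫ x in (univ : Set Ω), c x ∂μ := by
        simpa using heq univ univ MeasurableSet.univ MeasurableSet.univ
      refine ext_of_generate_finite (m0 := ma ⊔ mb) C hgen hpi ?_ ?_
      · rintro u ⟨s, t, hs, ht, rfl⟩
        have hu : MeasurableSet[ma ⊔ mb] (s ∩ t) :=
          ((le_sup_left : ma ≤ ma ⊔ mb) _ hs).inter ((le_sup_right : mb ≤ ma ⊔ mb) _ ht)
        rw [hval f hf_int hf0 _ hu, hval c hc_int hc0 _ hu, heq s t hs ht]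
      · rw [hval f hf_int hf0 _ MeasurableSet.univ, hval c hc_int hc0 _ MeasurableSet.univ,
          heq_univ]
    intro u hu
    have h1 := hval f hf_int hf0 u hu
    have h2 := hval c hc_int hc0 u hu
    rw [htrim, h2] at h1
    have hif : 0 ≤ ∫ x in u, f x ∂μ := integral_nonneg_of_ae (ae_restrict_of_ae hf0)
    have hic : 0 ≤ ∫ x in u, c x ∂μ := integral_nonneg_of_ae (ae_restrict_of_ae hc0)
    exact ((ENNReal.ofReal_eq_ofReal_iff hic hif).mp h1).symm
  exact (ae_eq_condExp_of_forall_setIntegral_eq hm hf_int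
    (fun s _ _ => hc_int.integrableOn)
    (fun s hs _ => (key s hs).symm)
    hc_meas.aestronglyMeasurable).symm


lemma indep_indepFun {ma mb : MeasurableSpace Ω} {m0 : MeasurableSpace Ω}
    {μ : Measure Ω} (h : Indep ma mb μ) {f g : Ω → ℝ}
    (hf : Measurable[ma] f) (hg : Measurable[mb] g) :
    IndepFun f g μ := by
  rw [indepFun_iff_measure_inter_preimage_eq_mul]
  intro s t hs ht
  exact (Indep_iff ma mb μ).1 h _ _ (hf hs) (hg ht)

/-- Collapse of conditioning: conditional product rule against all `B ∈ m1` implies that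
conditioning the indicator of `A` on `m1 ⊔ m2` equals conditioning on `m2`. -/
lemma condexp_collapse_of_prod {m1 m2 : MeasurableSpace Ω} {m0 : MeasurableSpace Ω}
    (μ : Measure Ω) [IsProbabilityMeasure μ] (hm1 : m1 ≤ m0) (hm2 : m2 ≤ m0)
    {A : Set Ω} (hA : MeasurableSet A)
    (h : ∀ B, MeasurableSet[m1] B →
      (μ[Set.indicator (A ∩ B) fun _ => (1:ℝ) | m2]) =ᵐ[μ]
        fun ω => (μ[Set.indicator A fun _ => (1:ℝ) | m2]) ω
          * (μ[Set.indicator B fun _ => (1:ℝ) | m2]) ω) :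
    μ[Set.indicator A fun _ => (1:ℝ) | m1 ⊔ m2]
      =ᵐ[μ] μ[Set.indicator A fun _ => (1:ℝ) | m2] := by
  set fA : Ω → ℝ := Set.indicator A fun _ => (1:ℝ) with hfA
  have hfA_int : Integrable fA μ := (integrable_const (1:ℝ)).indicator hA
  have hfA0 : 0 ≤ᵐ[μ] fA :=
    Filter.Eventually.of_forall fun x => Set.indicator_nonneg (fun _ _ => zero_le_one) x
  refine condexp_sup_unique μ hm1 hm2 hfA_int integrable_condExp hfA0
    (condExp_nonneg hfA0) (stronglyMeasurable_condExp.mono le_sup_right) ?_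
  intro s t hs ht
  have hs0 : MeasurableSet s := hm1 s hs
  have ht0 : MeasurableSet t := hm2 t ht
  set c : Ω → ℝ := μ[fA | m2] with hc
  set oneS : Ω → ℝ := Set.indicator s fun _ => (1:ℝ) with honeS
  have honeS_int : Integrable oneS μ := (integrable_const (1:ℝ)).indicator hs0
  have hASint : Integrable (Set.indicator (A ∩ s) fun _ => (1:ℝ)) μ :=
    (integrable_const (1:ℝ)).indicator (hA.inter hs0)
  have hcS_int : Integrable (c * oneS) μ := by
    have : Integrable (oneS * c) μ := by
      refine integrable_condExp.bdd_mul
        ((stronglyMeasurable_const.indicator hs0)).aestronglyMeasurable (c := 1) (Filter.Eventually.of_forall fun x => ?_)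
      classical
      by_cases hx : x ∈ s <;> simp [honeS, Set.indicator_apply, hx]
    rwa [mul_comm] at this
  have e1 : ∫ x in s ∩ t, fA x ∂μ = ∫ x in t, Set.indicator (A ∩ s) (fun _ => (1:ℝ)) x ∂μ := by
    rw [hfA, setIntegral_indicator hA, setIntegral_indicator (hA.inter hs0)]
    rw [show s ∩ t ∩ A = t ∩ (A ∩ s) from by ext x; simp only [Set.mem_inter_iff]; tauto]
  have e2 : ∫ x in t, Set.indicator (A ∩ s) (fun _ => (1:ℝ)) x ∂μ
      = ∫ x in t, (μ[Set.indicator (A ∩ s) fun _ => (1:ℝ) | m2]) x ∂μ :=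
    (setIntegral_condExp hm2 hASint ht).symm
  have e3 : ∫ x in t, (μ[Set.indicator (A ∩ s) fun _ => (1:ℝ) | m2]) x ∂μ
      = ∫ x in t, c x * (μ[oneS | m2]) x ∂μ :=
    setIntegral_congr_ae (hm2 t ht) ((h s hs).mono fun x hx _ => hx)
  have hmul : μ[c * oneS | m2] =ᵐ[μ] c * μ[oneS | m2] :=
    condExp_mul_of_stronglyMeasurable_left stronglyMeasurable_condExp hcS_int honeS_int
  have e4 : ∫ x in t, c x * (μ[oneS | m2]) x ∂μ = ∫ x in t, (μ[c * oneS | m2]) x ∂μ :=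
    setIntegral_congr_ae (hm2 t ht) (hmul.mono fun x hx _ => hx.symm)
  have e5 : ∫ x in t, (μ[c * oneS | m2]) x ∂μ = ∫ x in t, (c * oneS) x ∂μ :=
    setIntegral_condExp hm2 hcS_int ht
  have e6 : ∫ x in t, (c * oneS) x ∂μ = ∫ x in s ∩ t, c x ∂μ := by
    have : (c * oneS) = Set.indicator s c := by
      funext x
      classical
      by_cases hx : x ∈ s <;> simp [honeS, Set.indicator_apply, hx]
    rw [this, setIntegral_indicator hs0, Set.inter_comm]
  rw [e1, e2, e3, e4, e5, e6]

/-- Under independence of `m2` from `m1 ⊔ m3`, conditioning an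
`m1 ⊔ m3`-measurable bounded function on `m2 ⊔ m3` collapses to conditioning on `m3`. -/
lemma condexp_collapse_of_indep {m1 m2 m3 : MeasurableSpace Ω} {m0 : MeasurableSpace Ω}
    (μ : Measure Ω) [IsProbabilityMeasure μ]
    (hm1 : m1 ≤ m0) (hm2 : m2 ≤ m0) (hm3 : m3 ≤ m0)
    (hindep : Indep m2 (m1 ⊔ m3) μ)
    {g : Ω → ℝ} (hg : StronglyMeasurable[m1 ⊔ m3] g)
    (hg0 : ∀ x, 0 ≤ g x) (hg1 : ∀ x, g x ≤ 1) :
    μ[g | m2 ⊔ m3] =ᵐ[μ] μ[g | m3] := by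
  have hm13 : m1 ⊔ m3 ≤ m0 := sup_le hm1 hm3
  have hgsm : StronglyMeasurable g := hg.mono hm13
  have hg_int : Integrable g μ := by
    refine Integrable.mono' (integrable_const (1:ℝ)) hgsm.aestronglyMeasurable ?_
    exact Filter.Eventually.of_forall fun x => by
      rw [Real.norm_eq_abs, abs_of_nonneg (hg0 x)]; exact hg1 x
  set c : Ω → ℝ := μ[g | m3] with hc
  refine condexp_sup_unique μ hm2 hm3 hg_int integrable_condExp
    (Filter.Eventually.of_forall hg0) (condExp_nonneg (Filter.Eventually.of_forall hg0))
    (stronglyMeasurable_condExp.mono le_sup_right) ?_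
  intro s t hs ht
  have hs0 : MeasurableSet s := hm2 s hs
  have ht0 : MeasurableSet t := hm3 t ht
  set oneS : Ω → ℝ := Set.indicator s fun _ => (1:ℝ) with honeS
  set oneT : Ω → ℝ := Set.indicator t fun _ => (1:ℝ) with honeT
  have honeS_int : Integrable oneS μ := (integrable_const (1:ℝ)).indicator hs0
  have h1smeas : Measurable[m2] oneS := measurable_const.indicator hs
  have key : ∀ F : Ω → ℝ, Measurable[m1 ⊔ m3] F → Integrable F μ →
      ∫ x in s ∩ t, F x ∂μ = (∫ x, oneS x ∂μ) * ∫ x in t, F x ∂μ := by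
    intro F hF hF_int
    have htFmeas : Measurable[m1 ⊔ m3] (oneT * F) :=
      (measurable_const.indicator ((le_sup_right : m3 ≤ m1 ⊔ m3) t ht)).mul hF
    have hIF : IndepFun oneS (oneT * F) μ := indep_indepFun hindep h1smeas htFmeas
    have htF_int : Integrable (oneT * F) μ := by
      refine hF_int.bdd_mul ((stronglyMeasurable_const.indicator ht0)).aestronglyMeasurable
        (c := 1) (Filter.Eventually.of_forall fun x => ?_)
      classical
      by_cases hx : x ∈ t <;> simp [honeT, Set.indicator_apply, hx]
    have hmul := hIF.integral_mul_eq_mul_integral honeS_int.aestronglyMeasurable htF_int.aestronglyMeasurable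
    calc ∫ x in s ∩ t, F x ∂μ
        = ∫ x, (oneS * (oneT * F)) x ∂μ := by
          rw [← integral_indicator (hs0.inter ht0)]
          congr 1
          funext x
          classical
          by_cases hxs : x ∈ s <;> by_cases hxt : x ∈ t <;>
            simp [honeS, honeT, Set.indicator_apply, hxs, hxt]
      _ = (∫ x, oneS x ∂μ) * ∫ x, (oneT * F) x ∂μ := hmul
      _ = (∫ x, oneS x ∂μ) * ∫ x in t, F x ∂μ := by
          congr 1
          rw [← integral_indicator ht0]
          congr 1
          funext x
          classical
          by_cases hxt : x ∈ t <;> simp [honeT, Set.indicator_apply, hxt]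
  rw [key g hg.measurable hg_int,
    key c (stronglyMeasurable_condExp.mono (le_sup_right : m3 ≤ m1 ⊔ m3)).measurable
      integrable_condExp,
    setIntegral_condExp hm3 hg_int ht]


lemma withDensity_null_iff {m0 : MeasurableSpace Ω} (μ : Measure Ω) {p : Ω → ENNReal}
    (hp : Measurable p) (hppos : ∀ x, 0 < p x) {s : Set Ω} (hs : MeasurableSet s) :
    μ.withDensity p s = 0 ↔ μ s = 0 := by
  rw [withDensity_apply _ hs, lintegral_eq_zero_iff hp, Filter.EventuallyEq, ae_iff]
  have : {x | ¬ p x = (0 : Ω → ENNReal) x} = Set.univ := by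
    refine Set.eq_univ_of_forall fun x => ?_
    simp only [Set.mem_setOf_eq, Pi.zero_apply]
    exact (hppos x).ne'
  rw [this, Measure.restrict_apply_univ]

lemma ae_eq_of_null_iff {m0 : MeasurableSpace Ω} {μ ν : Measure Ω}
    (h : ∀ s, MeasurableSet s → (μ s = 0 ↔ ν s = 0)) : ae μ = ae ν := by
  have h' : ∀ s : Set Ω, μ s = 0 ↔ ν s = 0 := by
    intro s
    constructor
    · intro h0
      have h1 : μ (toMeasurable μ s) = 0 := by rwa [measure_toMeasurable]
      have h2 : ν (toMeasurable μ s) = 0 :=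
        (h _ (measurableSet_toMeasurable μ s)).mp h1
      exact measure_mono_null (subset_toMeasurable μ s) h2
    · intro h0
      have h1 : ν (toMeasurable ν s) = 0 := by rwa [measure_toMeasurable]
      have h2 : μ (toMeasurable ν s) = 0 :=
        (h _ (measurableSet_toMeasurable ν s)).mpr h1
      exact measure_mono_null (subset_toMeasurable ν s) h2
  refine Filter.ext fun s => ?_
  simp only [mem_ae_iff, h']

section PiLemmas

variable {ι : Type*} [Fintype ι] {α : ι → Type*} [∀ i, MeasurableSpace (α i)]

open Function

lemma lmarginal_prod [DecidableEq ι] (μ : ∀ i, Measure (α i)) [∀ i, SigmaFinite (μ i)]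
    (f : ∀ i, α i → ENNReal) (hf : ∀ i, Measurable (f i)) (s : Finset ι) :
    ∀ x, (∫⋯∫⁻_s, (fun y => ∏ i ∈ s, f i (y i)) ∂μ) x = ∏ i ∈ s, ∫⁻ y, f i y ∂μ i := by
  induction s using Finset.induction_on with
  | empty => intro x; simp
  | @insert i s hi ih =>
    intro x
    have hmeas : Measurable fun y : ∀ j, α j => ∏ j ∈ insert i s, f j (y j) :=
      Finset.measurable_prod _ fun j _ => (hf j).comp (measurable_pi_apply j)
    rw [lmarginal_insert _ hmeas hi]
    have inner_eq : ∀ z : ∀ j, α j,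
        (∫⋯∫⁻_s, (fun y => ∏ j ∈ insert i s, f j (y j)) ∂μ) z
          = f i (z i) * ∏ j ∈ s, ∫⁻ y, f j y ∂μ j := by
      intro z
      have hprodeq : (fun y : ∀ j, α j => ∏ j ∈ insert i s, f j (y j))
          = fun y => f i (y i) * ∏ j ∈ s, f j (y j) := by
        funext y; exact Finset.prod_insert hi
      rw [hprodeq]
      simp only [lmarginal]
      have hupd : ∀ y : ∀ j : s, α j, updateFinset z s y i = z i := by
        intro y
        simp [updateFinset, hi]
      calc ∫⁻ y, f i (updateFinset z s y i) * ∏ j ∈ s, f j (updateFinset z s y j)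
              ∂(Measure.pi fun j : s => μ j.1)
          = ∫⁻ y, f i (z i) * ∏ j ∈ s, f j (updateFinset z s y j)
              ∂(Measure.pi fun j : s => μ j.1) := by
            refine lintegral_congr fun y => ?_
            rw [hupd y]
        _ = f i (z i) * ∫⁻ y, ∏ j ∈ s, f j (updateFinset z s y j)
              ∂(Measure.pi fun j : s => μ j.1) := by
            refine lintegral_const_mul _ ?_
            exact (Finset.measurable_prod _ fun j _ =>
              (hf j).comp (measurable_pi_apply j)).comp measurable_updateFinset
        _ = f i (z i) * ∏ j ∈ s, ∫⁻ y, f j y ∂μ j := by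
            rw [show (∫⁻ y, ∏ j ∈ s, f j (updateFinset z s y j)
                ∂(Measure.pi fun j : s => μ j.1))
              = (∫⋯∫⁻_s, (fun y => ∏ j ∈ s, f j (y j)) ∂μ) z from rfl, ih z]
    simp_rw [inner_eq, Function.update_self]
    rw [lintegral_mul_const _ (hf i), Finset.prod_insert hi]
  
lemma lintegral_pi_prod [∀ i, Nonempty (α i)] (μ : ∀ i, Measure (α i))
    [∀ i, SigmaFinite (μ i)]
    (f : ∀ i, α i → ENNReal) (hf : ∀ i, Measurable (f i)) :
    ∫⁻ x, ∏ i, f i (x i) ∂Measure.pi μ = ∏ i, ∫⁻ x, f i x ∂μ i := by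
  classical
  have x : ∀ i, α i := fun i => Classical.arbitrary _
  rw [lintegral_eq_lmarginal_univ x]
  exact lmarginal_prod μ f hf Finset.univ x

lemma pi_withDensity_eq [∀ i, Nonempty (α i)] (μ : ∀ i, Measure (α i))
    [∀ i, SigmaFinite (μ i)]
    (d : ∀ i, α i → ENNReal) (hd : ∀ i, Measurable (d i))
    [∀ i, SigmaFinite ((μ i).withDensity (d i))] :
    Measure.pi (fun i => (μ i).withDensity (d i))
      = (Measure.pi μ).withDensity (fun x => ∏ i, d i (x i)) := by
  refine Measure.pi_eq fun s hs => ?_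
  rw [withDensity_apply _ (MeasurableSet.univ_pi hs),
    ← lintegral_indicator (MeasurableSet.univ_pi hs)]
  have hind : (Set.univ.pi s).indicator (fun x => ∏ i, d i (x i))
      = fun x => ∏ i, ((s i).indicator (d i)) (x i) := by
    funext x
    by_cases hx : x ∈ Set.univ.pi s
    · rw [Set.indicator_of_mem hx]
      exact Finset.prod_congr rfl fun i _ =>
        (Set.indicator_of_mem (hx i (Set.mem_univ i)) _).symm
    · rw [Set.indicator_of_notMem hx]
      obtain ⟨i, -, hxi⟩ : ∃ i ∈ (Set.univ : Set ι), x i ∉ s i := by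
        simpa [Set.mem_pi] using hx
      exact (Finset.prod_eq_zero (Finset.mem_univ i)
        (Set.indicator_of_notMem hxi _)).symm
  rw [hind, lintegral_pi_prod μ _ (fun i => (hd i).indicator (hs i))]
  exact Finset.prod_congr rfl fun i _ => by
    rw [withDensity_apply _ (hs i), ← lintegral_indicator (hs i)]

lemma iIndep_comap_pi (ν : ∀ i, Measure (α i)) [∀ i, IsProbabilityMeasure (ν i)] :
    iIndep (fun i => MeasurableSpace.comap (fun f : ∀ j, α j => f i) inferInstance)
      (Measure.pi ν) := by
  classical
  rw [iIndep_iff]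
  intro S s hs
  choose t ht hts using fun (i : ι) (hi : i ∈ S) =>
    MeasurableSpace.measurableSet_comap.mp (hs i hi)
  set u : ∀ i, Set (α i) := fun i => if hi : i ∈ S then t i hi else Set.univ with hu
  have humeas : ∀ i, MeasurableSet (u i) := by
    intro i
    by_cases hi : i ∈ S <;> simp only [hu, hi, dif_pos, dif_neg, not_false_iff]
    · exact ht i hi
    · exact MeasurableSet.univ
  have hsu : ∀ i (hi : i ∈ S), s i = (fun f : ∀ j, α j => f i) ⁻¹' u i := by
    intro i hi
    rw [hu]; simp only [dif_pos hi]
    exact (hts i hi).symm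
  have hInter : ⋂ i ∈ S, s i = Set.pi Set.univ u := by
    ext x
    simp only [Set.mem_iInter, Set.mem_pi, Set.mem_univ, true_implies]
    constructor
    · intro h i
      by_cases hi : i ∈ S
      · have := h i hi
        rwa [hsu i hi] at this
      · simp only [hu, dif_neg hi]
        exact Set.mem_univ _
    · intro h i hi
      rw [hsu i hi]
      exact h i
  have hsingle : ∀ i ∈ S, Measure.pi ν (s i) = ν i (u i) := by
    intro i hi
    rw [hsu i hi]
    have hpre : (fun f : ∀ j, α j => f i) ⁻¹' u i
        = Set.pi Set.univ (Function.update (fun j => (Set.univ : Set (α j))) i (u i)) := by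
      ext x
      simp only [Set.mem_preimage, Set.mem_pi, Set.mem_univ, true_implies]
      constructor
      · intro hxi j
        by_cases hj : j = i
        · subst hj; rwa [Function.update_self]
        · rw [Function.update_of_ne hj]; exact Set.mem_univ _
      · intro h
        have := h i
        rwa [Function.update_self] at this
    rw [hpre, Measure.pi_pi]
    refine Finset.prod_eq_single_of_mem i (Finset.mem_univ i) (fun j _ hji => ?_) |>.trans ?_
    · rw [Function.update_of_ne hji]; exact measure_univ
    · rw [Function.update_self]
  rw [hInter, Measure.pi_pi]
  rw [Finset.prod_congr rfl hsingle]
  refine (Finset.prod_subset (Finset.subset_univ S) fun i _ hnot => ?_).symm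
  simp only [hu, dif_neg hnot]
  exact measure_univ

end PiLemmas

end Helpers


end IntersectionHelpers

open Set in
/-- Conditional independence of coordinate projections under a
probability distribution on a product of standard Borel spaces that admits a strictly
positive density with respect to a product measure satisfies the intersection property:
for pairwise disjoint coordinate sets `X, Y, Z, W`, if `X ⟂ Y | W ∪ Z` and
`X ⟂ W | Y ∪ Z` then `X ⟂ Y ∪ W | Z`. -/
theorem condIndep_intersection_of_pos_density
    {V : Type*} [Fintype V] (𝒳 : V → Type*)
    [∀ v, MeasurableSpace (𝒳 v)] [∀ v, StandardBorelSpace (𝒳 v)]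
    [∀ v, Nonempty (𝒳 v)] [StandardBorelSpace (∀ v, 𝒳 v)]
    (μ : ∀ v, Measure (𝒳 v)) [∀ v, SigmaFinite (μ v)]
    (p : (∀ v, 𝒳 v) → ENNReal) (hp : Measurable p) (hppos : ∀ x, 0 < p x)
    (P : Measure (∀ v, 𝒳 v)) [IsProbabilityMeasure P]
    (hP : P = (Measure.pi μ).withDensity p)
    (X Y Z W : Set V)
    (hXY : Disjoint X Y) (hXZ : Disjoint X Z) (hXW : Disjoint X W)
    (hYZ : Disjoint Y Z) (hYW : Disjoint Y W) (hZW : Disjoint Z W)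
    (h1 : CondIndepFun
      (MeasurableSpace.comap (fun f (v : ↥(W ∪ Z)) => f v.1) inferInstance)
      ((measurable_pi_lambda _ (fun v => measurable_pi_apply _)).comap_le)
      (fun f (v : X) => f v.1) (fun f (v : Y) => f v.1) P)
    (h2 : CondIndepFun
      (MeasurableSpace.comap (fun f (v : ↥(Y ∪ Z)) => f v.1) inferInstance)
      ((measurable_pi_lambda _ (fun v => measurable_pi_apply _)).comap_le)
      (fun f (v : X) => f v.1) (fun f (v : W) => f v.1) P) :
    CondIndepFun
      (MeasurableSpace.comap (fun f (v : Z) => f v.1) inferInstance)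
      ((measurable_pi_lambda _ (fun v => measurable_pi_apply _)).comap_le)
      (fun f (v : X) => f v.1) (fun f (v : ↥(Y ∪ W)) => f v.1) P := by
  classical
  -- abbreviations for the coordinate σ-algebras
  let Ωt := ∀ v, 𝒳 v
  let em : V → MeasurableSpace Ωt :=
    fun v => MeasurableSpace.comap (fun f => f v) inferInstance
  let ms : Set V → MeasurableSpace Ωt :=
    fun A => MeasurableSpace.comap (fun f (v : A) => f v.1) inferInstance
  have hem_le : ∀ v, em v ≤ (inferInstance : MeasurableSpace Ωt) :=
    fun v => (measurable_pi_apply v).comap_le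
  have hms : ∀ A : Set V, ms A = ⨆ v ∈ A, em v := by
    intro A
    show MeasurableSpace.comap _ MeasurableSpace.pi = _
    rw [MeasurableSpace.pi, MeasurableSpace.comap_iSup]
    simp only [MeasurableSpace.comap_comp]
    rw [iSup_subtype]
    rfl
  have hm_le : ∀ A : Set V, ms A ≤ (inferInstance : MeasurableSpace Ωt) := by
    intro A
    rw [hms]
    exact iSup₂_le fun v _ => hem_le v
  have hsup : ∀ A B : Set V, ms A ⊔ ms B = ms (A ∪ B) := by
    intro A B
    rw [hms, hms, hms, iSup_union]
  have hmono : ∀ {A B : Set V}, A ⊆ B → ms A ≤ ms B := by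
    intro A B hAB
    rw [hms, hms]
    exact biSup_mono hAB
  -- each μ v is nonzero
  have hP1 : P Set.univ = 1 := measure_univ
  have hμuniv_ne : ∀ v, μ v Set.univ ≠ 0 := by
    intro v hv
    have hpi0 : Measure.pi μ = 0 := by
      apply Measure.measure_univ_eq_zero.mp
      rw [Measure.pi_univ]
      exact Finset.prod_eq_zero (Finset.mem_univ v) hv
    have hP0 : P = 0 := by
      rw [hP, hpi0]
      refine Measure.ext fun s hs => ?_
      rw [withDensity_apply _ hs]
      simp
    rw [hP0] at hP1
    simp at hP1
  -- an equivalent product probability measure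
  choose gg hgg_pos hgg_meas hgg_int using fun v =>
    exists_pos_lintegral_lt_of_sigmaFinite (μ v) (ε := 1) one_ne_zero
  set I : V → ENNReal := fun v => ∫⁻ x, (gg v x : ENNReal) ∂μ v with hIdef
  have hI_ne_top : ∀ v, I v ≠ ⊤ := fun v => ((hgg_int v).trans ENNReal.one_lt_top).ne
  have hI_ne : ∀ v, I v ≠ 0 := by
    intro v
    refine ((lintegral_pos_iff_support (hgg_meas v).coe_nnreal_ennreal).mpr ?_).ne'
    have hsupp : (Function.support fun x => (gg v x : ENNReal)) = Set.univ :=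
      Set.eq_univ_of_forall fun x => ENNReal.coe_ne_zero.mpr (hgg_pos v x).ne'
    rw [hsupp]
    exact pos_iff_ne_zero.mpr (hμuniv_ne v)
  set d : ∀ v, 𝒳 v → ENNReal := fun v x => (I v)⁻¹ * (gg v x : ENNReal) with hddef
  have hd_meas : ∀ v, Measurable (d v) :=
    fun v => measurable_const.mul (hgg_meas v).coe_nnreal_ennreal
  have hd_pos : ∀ v x, 0 < d v x := by
    intro v x
    refine ENNReal.mul_pos (ENNReal.inv_ne_zero.mpr (hI_ne_top v)) ?_
    exact ENNReal.coe_ne_zero.mpr (hgg_pos v x).ne'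
  set ν : ∀ v, Measure (𝒳 v) := fun v => (μ v).withDensity (d v) with hνdef
  haveI hνprob : ∀ v, IsProbabilityMeasure (ν v) := by
    intro v
    constructor
    show (μ v).withDensity (d v) Set.univ = 1
    rw [withDensity_apply _ MeasurableSet.univ, Measure.restrict_univ]
    have : ∫⁻ x, d v x ∂μ v = (I v)⁻¹ * I v := by
      rw [hddef]
      exact lintegral_const_mul _ (hgg_meas v).coe_nnreal_ennreal
    rw [this]
    exact ENNReal.inv_mul_cancel (hI_ne v) (hI_ne_top v)
  set Q : Measure Ωt := Measure.pi ν with hQdef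
  haveI : IsProbabilityMeasure Q := ⟨by rw [hQdef, Measure.pi_univ]; simp⟩
  haveI : ∀ v, SigmaFinite ((μ v).withDensity (d v)) := by
    intro v
    haveI := hνprob v
    infer_instance
  have hQpi : Q = (Measure.pi μ).withDensity (fun x => ∏ v, d v (x v)) := by
    rw [hQdef, hνdef]
    exact pi_withDensity_eq μ d hd_meas
  have hD_meas : Measurable fun x : Ωt => ∏ v, d v (x v) :=
    Finset.measurable_prod _ fun v _ => (hd_meas v).comp (measurable_pi_apply v)
  have hD_pos : ∀ x : Ωt, 0 < ∏ v, d v (x v) :=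
    fun x => CanonicallyOrderedAdd.prod_pos.mpr fun v _ => hd_pos v (x v)
  have hnull : ∀ s : Set Ωt, MeasurableSet s → (P s = 0 ↔ Q s = 0) := by
    intro s hs
    rw [hP, hQpi, withDensity_null_iff _ hp hppos hs,
      withDensity_null_iff _ hD_meas hD_pos hs]
  have hae : ae P = ae Q := ae_eq_of_null_iff hnull
  -- rewrite the conditional independence statements via conditional expectations
  have hπX : Measurable fun f : Ωt => fun v : X => f v.1 :=
    measurable_pi_lambda _ fun v => measurable_pi_apply _
  have hπYW : Measurable fun f : Ωt => fun v : ↥(Y ∪ W) => f v.1 :=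
    measurable_pi_lambda _ fun v => measurable_pi_apply _
  rw [condIndepFun_iff_condExp_inter_preimage_eq_mul hπX hπYW]
  rw [condIndepFun_iff_condExp_inter_preimage_eq_mul hπX
    (measurable_pi_lambda _ fun v => measurable_pi_apply _)] at h1
  rw [condIndepFun_iff_condExp_inter_preimage_eq_mul hπX
    (measurable_pi_lambda _ fun v => measurable_pi_apply _)] at h2
  intro s t hs ht
  set A : Set Ωt := (fun f : Ωt => fun v : X => f v.1) ⁻¹' s with hAdef
  set B : Set Ωt := (fun f : Ωt => fun v : ↥(Y ∪ W) => f v.1) ⁻¹' t with hBdef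
  have hA0 : MeasurableSet A := hπX hs
  have hBYW : MeasurableSet[ms (Y ∪ W)] B :=
    MeasurableSpace.measurableSet_comap.mpr ⟨t, ht, rfl⟩
  have hB0 : MeasurableSet B := hπYW ht
  set fA : Ωt → ℝ := Set.indicator A fun _ => (1:ℝ) with hfAdef
  set fB : Ωt → ℝ := Set.indicator B fun _ => (1:ℝ) with hfBdef
  have hfA_int : Integrable fA P := (integrable_const (1:ℝ)).indicator hA0
  have hfB_int : Integrable fB P := (integrable_const (1:ℝ)).indicator hB0
  have hfA0 : 0 ≤ᵐ[P] fA :=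
    Filter.Eventually.of_forall fun x => Set.indicator_nonneg (fun _ _ => zero_le_one) x
  have hfA1 : fA ≤ᵐ[P] fun _ => (1:ℝ) := by
    refine Filter.Eventually.of_forall fun x => ?_
    by_cases hx : x ∈ A <;> simp [hfAdef, Set.indicator_apply, hx]
  -- collapse of conditioning using h1 and h2
  have hcol1 : P[fA | ms Y ⊔ ms (W ∪ Z)] =ᵐ[P] P[fA | ms (W ∪ Z)] := by
    refine condexp_collapse_of_prod P (hm_le Y) (hm_le (W ∪ Z)) hA0 ?_
    intro B' hB'
    obtain ⟨t', ht', rfl⟩ := MeasurableSpace.measurableSet_comap.mp hB'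
    exact h1 s t' hs ht'
  have hcol2 : P[fA | ms W ⊔ ms (Y ∪ Z)] =ᵐ[P] P[fA | ms (Y ∪ Z)] := by
    refine condexp_collapse_of_prod P (hm_le W) (hm_le (Y ∪ Z)) hA0 ?_
    intro B' hB'
    obtain ⟨t', ht', rfl⟩ := MeasurableSpace.measurableSet_comap.mp hB'
    exact h2 s t' hs ht'
  have hswap : ms Y ⊔ ms (W ∪ Z) = ms W ⊔ ms (Y ∪ Z) := by
    rw [hsup Y (W ∪ Z), hsup W (Y ∪ Z), Set.union_left_comm]
  have hgh : P[fA | ms (W ∪ Z)] =ᵐ[P] P[fA | ms (Y ∪ Z)] := by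
    have h2' := hcol2
    rw [← hswap] at h2'
    exact hcol1.symm.trans h2'
  -- truncations
  have htr : ∀ N : Set V,
      (fun x => trunc01 ((P[fA | ms N]) x)) =ᵐ[P] P[fA | ms N] := by
    intro N
    have hb1 : 0 ≤ᵐ[P] P[fA | ms N] := condExp_nonneg hfA0
    have hb2 : P[fA | ms N] ≤ᵐ[P] fun _ => (1:ℝ) := by
      have hmono' := condExp_mono (μ := P) (m := ms N) hfA_int (integrable_const (1:ℝ)) hfA1
      rwa [condExp_const (hm_le N) (1:ℝ)] at hmono'
    filter_upwards [hb1, hb2] with x h1x h2x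
    exact trunc01_of_mem h1x h2x
  set g : Ωt → ℝ := fun x => trunc01 ((P[fA | ms (Y ∪ Z)]) x) with hgdef
  set h : Ωt → ℝ := fun x => trunc01 ((P[fA | ms (W ∪ Z)]) x) with hhdef
  have hg_ae : g =ᵐ[P] P[fA | ms (Y ∪ Z)] := htr (Y ∪ Z)
  have hh_ae : h =ᵐ[P] P[fA | ms (W ∪ Z)] := htr (W ∪ Z)
  have hgh' : h =ᵐ[P] g := hh_ae.trans (hgh.trans hg_ae.symm)
  have hghQ : h =ᵐ[Q] g := hae ▸ hgh'
  have hg_sm : StronglyMeasurable[ms Y ⊔ ms Z] g := by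
    rw [hsup]
    exact continuous_trunc01.comp_stronglyMeasurable stronglyMeasurable_condExp
  have hh_sm : StronglyMeasurable[ms W ⊔ ms Z] h := by
    rw [hsup]
    exact continuous_trunc01.comp_stronglyMeasurable stronglyMeasurable_condExp
  have hg0' : ∀ x, 0 ≤ g x := fun x => trunc01_nonneg _
  have hg1' : ∀ x, g x ≤ 1 := fun x => trunc01_le_one _
  have hh0' : ∀ x, 0 ≤ h x := fun x => trunc01_nonneg _
  have hh1' : ∀ x, h x ≤ 1 := fun x => trunc01_le_one _
  have hh_int_Q : Integrable h Q := by
    refine Integrable.mono' (integrable_const (1:ℝ))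
      ((hh_sm.mono (sup_le (hm_le W) (hm_le Z))).aestronglyMeasurable) ?_
    exact Filter.Eventually.of_forall fun x => by
      rw [Real.norm_eq_abs, abs_of_nonneg (hh0' x)]; exact hh1' x
  have hg_int_Q : Integrable g Q := by
    refine Integrable.mono' (integrable_const (1:ℝ))
      ((hg_sm.mono (sup_le (hm_le Y) (hm_le Z))).aestronglyMeasurable) ?_
    exact Filter.Eventually.of_forall fun x => by
      rw [Real.norm_eq_abs, abs_of_nonneg (hg0' x)]; exact hg1' x
  -- independence under Q
  have hiQ : iIndep em Q := iIndep_comap_pi ν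
  have hdisj : Disjoint W (Y ∪ Z) := Set.disjoint_union_right.mpr ⟨hYW.symm, hZW.symm⟩
  have hindepQ : Indep (ms W) (ms Y ⊔ ms Z) Q := by
    rw [hms W, hms Y, hms Z, ← iSup_union]
    exact indep_iSup_of_disjoint hem_le hiQ hdisj
  have hcollapse : Q[g | ms W ⊔ ms Z] =ᵐ[Q] Q[g | ms Z] :=
    condexp_collapse_of_indep Q (hm_le Y) (hm_le W) (hm_le Z) hindepQ hg_sm hg0' hg1'
  set c : Ωt → ℝ := Q[g | ms Z] with hcdef
  have hQh : Q[h | ms W ⊔ ms Z] = h :=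
    condExp_of_stronglyMeasurable (sup_le (hm_le W) (hm_le Z)) hh_sm hh_int_Q
  have hhc : h =ᵐ[Q] c := by
    have hx := (condExp_congr_ae (μ := Q) (m := ms W ⊔ ms Z) hghQ).trans hcollapse
    rwa [hQh] at hx
  have hhcP : h =ᵐ[P] c := hae.symm ▸ hhc
  -- c is [0,1] a.e. and integrable w.r.t. P
  have hc0Q : 0 ≤ᵐ[Q] c := condExp_nonneg (Filter.Eventually.of_forall hg0')
  have hc1Q : c ≤ᵐ[Q] fun _ => (1:ℝ) := by
    have hmono' := condExp_mono (μ := Q) (m := ms Z) hg_int_Q (integrable_const (1:ℝ))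
      (Filter.Eventually.of_forall hg1')
    rwa [condExp_const (hm_le Z) (1:ℝ)] at hmono'
  have hc0P : 0 ≤ᵐ[P] c := hae.symm ▸ hc0Q
  have hc1P : c ≤ᵐ[P] fun _ => (1:ℝ) := hae.symm ▸ hc1Q
  have hc_int_P : Integrable c P := by
    refine Integrable.mono' (integrable_const (1:ℝ))
      ((stronglyMeasurable_condExp.mono (hm_le Z)).aestronglyMeasurable) ?_
    filter_upwards [hc0P, hc1P] with x ha hb
    rw [Real.norm_eq_abs, abs_of_nonneg ha]; exact hb
  -- tower property
  have hZle : ms Z ≤ ms Y ⊔ ms (W ∪ Z) :=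
    le_trans (hmono Set.subset_union_right) le_sup_right
  have hYWZ_le : ms Y ⊔ ms (W ∪ Z) ≤ (inferInstance : MeasurableSpace Ωt) :=
    sup_le (hm_le Y) (hm_le (W ∪ Z))
  have hE1 : P[fA | ms Y ⊔ ms (W ∪ Z)] =ᵐ[P] c :=
    hcol1.trans (hh_ae.symm.trans hhcP)
  have hE2 : P[fA | ms Z] =ᵐ[P] c := by
    have t1 : P[P[fA | ms Y ⊔ ms (W ∪ Z)] | ms Z] =ᵐ[P] P[fA | ms Z] :=
      condExp_condExp_of_le hZle hYWZ_le
    have t2 : P[P[fA | ms Y ⊔ ms (W ∪ Z)] | ms Z] =ᵐ[P] P[c | ms Z] :=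
      condExp_congr_ae hE1
    have t3 : P[c | ms Z] = c :=
      condExp_of_stronglyMeasurable (hm_le Z) stronglyMeasurable_condExp hc_int_P
    refine t1.symm.trans (t2.trans ?_)
    rw [t3]
  -- final computation
  have hfABmul : Set.indicator (A ∩ B) (fun _ => (1:ℝ)) = fB * fA := by
    funext x
    by_cases hx1 : x ∈ A <;> by_cases hx2 : x ∈ B <;>
      simp [hfAdef, hfBdef, Set.indicator_apply, hx1, hx2]
  have hfB_sm : StronglyMeasurable[ms Y ⊔ ms (W ∪ Z)] fB := by
    refine stronglyMeasurable_const.indicator ?_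
    have hBle : ms (Y ∪ W) ≤ ms Y ⊔ ms (W ∪ Z) := by
      rw [hsup Y (W ∪ Z)]
      exact hmono (Set.union_subset_union_right Y Set.subset_union_left)
    exact hBle B hBYW
  have hfB_bdd : ∃ C, ∀ x, ‖fB x‖ ≤ C := by
    refine ⟨1, fun x => ?_⟩
    by_cases hx : x ∈ B <;> simp [hfBdef, Set.indicator_apply, hx]
  have hfBfA_int : Integrable (fB * fA) P :=
    hfA_int.bdd_mul ((stronglyMeasurable_const.indicator hB0)).aestronglyMeasurable (Filter.Eventually.of_forall hfB_bdd.choose_spec)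
  have hpull1 : P[fB * fA | ms Y ⊔ ms (W ∪ Z)] =ᵐ[P] fB * P[fA | ms Y ⊔ ms (W ∪ Z)] :=
    condExp_mul_of_stronglyMeasurable_left hfB_sm hfBfA_int hfA_int
  have hstep : P[fB * fA | ms Y ⊔ ms (W ∪ Z)] =ᵐ[P] c * fB := by
    refine hpull1.trans ?_
    have h5 : P[fA | ms Y ⊔ ms (W ∪ Z)] * fB =ᵐ[P] c * fB :=
      hE1.mul (Filter.EventuallyEq.refl (ae P) fB)
    rw [mul_comm fB (P[fA | ms Y ⊔ ms (W ∪ Z)])]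
    exact h5
  have hcfB_int : Integrable (c * fB) P := by
    have hx : Integrable (fB * c) P :=
      hc_int_P.bdd_mul ((stronglyMeasurable_const.indicator hB0)).aestronglyMeasurable (Filter.Eventually.of_forall hfB_bdd.choose_spec)
    rwa [mul_comm] at hx
  have hpull2 : P[c * fB | ms Z] =ᵐ[P] c * P[fB | ms Z] :=
    condExp_mul_of_stronglyMeasurable_left stronglyMeasurable_condExp hcfB_int hfB_int
  have t1 : P[Set.indicator (A ∩ B) (fun _ => (1:ℝ)) | ms Z] =ᵐ[P]
      P[P[Set.indicator (A ∩ B) (fun _ => (1:ℝ)) | ms Y ⊔ ms (W ∪ Z)] | ms Z] :=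
    (condExp_condExp_of_le hZle hYWZ_le).symm
  have t2 : P[P[Set.indicator (A ∩ B) (fun _ => (1:ℝ)) | ms Y ⊔ ms (W ∪ Z)] | ms Z]
      =ᵐ[P] P[c * fB | ms Z] := by
    refine condExp_congr_ae ?_
    rw [hfABmul]
    exact hstep
  have t4 : c * P[fB | ms Z] =ᵐ[P]
      fun ω => (P[fA | ms Z]) ω * (P[fB | ms Z]) ω :=
    hE2.symm.mul (Filter.EventuallyEq.refl (ae P) (P[fB | ms Z]))
  exact t1.trans (t2.trans (hpull2.trans t4))
end
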